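/- Every two-sided hyperideal A of an intra-regular LA-semihypergroup H with left identity is idempotent: A ∘ A = A. -/
import Mathlib


open Set

/-- Elementwise extension of a hyperoperation to subsets:
`hmul op A B = ⋃_{a∈A, b∈B} op a b`. -/
def hmul {H : Type*} (op : H → H → Set H) (A B : Set H) : Set H :=
  ⋃ a ∈ A, ⋃ b ∈ B, op a b

lemma mem_hmul' {H : Type*} {op : H → H → Set H} {A B : Set H} {z : H} :
    z ∈ hmul op A B ↔ ∃ a ∈ A, ∃ b ∈ B, z ∈ op a b := by
  simp [hmul]

lemma hmul_mono' {H : Type*} {op : H → H → Set H} {A A' B B' : Set H}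
    (hA : A ⊆ A') (hB : B ⊆ B') : hmul op A B ⊆ hmul op A' B' := by
  intro z hz
  rw [mem_hmul'] at hz ⊢
  obtain ⟨a, ha, b, hb, hz⟩ := hz
  exact ⟨a, hA ha, b, hB hb, hz⟩

lemma hli_sub {H : Type*} {op : H → H → Set H}
    (hLA : ∀ x y z : H, hmul op (op x y) {z} = hmul op (op z y) {x})
    (A B C : Set H) :
    hmul op (hmul op A B) C ⊆ hmul op (hmul op C B) A := by
  intro z hz
  rw [mem_hmul'] at hz
  obtain ⟨t, ht, c, hc, hz⟩ := hz
  rw [mem_hmul'] at ht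
  obtain ⟨a, ha, b, hb, ht⟩ := ht
  have h1 : z ∈ hmul op (op a b) {c} := mem_hmul'.2 ⟨t, ht, c, rfl, hz⟩
  rw [hLA] at h1
  rw [mem_hmul'] at h1
  obtain ⟨s, hs, a', ha', hz'⟩ := h1
  rw [mem_singleton_iff] at ha'
  exact mem_hmul'.2 ⟨s, mem_hmul'.2 ⟨c, hc, b, hb, hs⟩, a', by rw [ha']; exact ha, hz'⟩

lemma hli' {H : Type*} {op : H → H → Set H}
    (hLA : ∀ x y z : H, hmul op (op x y) {z} = hmul op (op z y) {x})
    (A B C : Set H) :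
    hmul op (hmul op A B) C = hmul op (hmul op C B) A :=
  Subset.antisymm (hli_sub hLA A B C) (hli_sub hLA C B A)

lemma hmedial' {H : Type*} {op : H → H → Set H}
    (hLA : ∀ x y z : H, hmul op (op x y) {z} = hmul op (op z y) {x})
    (A B C D : Set H) :
    hmul op (hmul op A B) (hmul op C D) = hmul op (hmul op A C) (hmul op B D) := by
  rw [hli' hLA A B (hmul op C D), hli' hLA C D B, hli' hLA (hmul op B D) C A]

theorem stmt15 {H : Type*} (op : H → H → Set H)
    (hne : ∀ a b : H, (op a b).Nonempty)
    (hLA : ∀ x y z : H, hmul op (op x y) {z} = hmul op (op z y) {x})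
    (e : H) (he : ∀ a : H, a ∈ op e a)
    (hir : ∀ a : H, ∃ x y : H, a ∈ hmul op (hmul op {x} (op a a)) {y})
    (A : Set H) (hAne : A.Nonempty)
    (hAl : hmul op Set.univ A ⊆ A) (hAr : hmul op A Set.univ ⊆ A) :
    hmul op A A = A := by
  apply Subset.antisymm
  · exact (hmul_mono' (subset_refl A) (subset_univ A)).trans hAr
  · intro a ha
    obtain ⟨x, y, hxy⟩ := hir a
    -- op a a = hmul op {a} {a}
    have hopaa : op a a = hmul op ({a} : Set H) {a} := by
      ext z; simp [mem_hmul']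
    have hx : ({x} : Set H) ⊆ hmul op {e} {x} := by
      intro z hz
      exact mem_hmul'.2 ⟨e, rfl, z, hz, he z⟩
    have step1 : hmul op (hmul op {x} (op a a)) {y} ⊆
        hmul op (hmul op (hmul op {e} {x}) (hmul op ({a} : Set H) {a})) {y} := by
      apply hmul_mono' _ (subset_refl _)
      rw [hopaa]
      exact hmul_mono' hx (subset_refl _)
    have step2 : hmul op (hmul op (hmul op {e} {x}) (hmul op ({a} : Set H) {a})) {y}
        = hmul op (hmul op {y} (hmul op {x} ({a} : Set H))) (hmul op {e} ({a} : Set H)) := by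
      rw [hmedial' hLA {e} {x} {a} {a}]
      exact hli' hLA (hmul op {e} {a}) (hmul op {x} {a}) {y}
    -- memberships in A
    have hsubA : ∀ u : H, hmul op ({u} : Set H) A ⊆ A := fun u =>
      (hmul_mono' (subset_univ _) (subset_refl A)).trans hAl
    have h1 : hmul op ({x} : Set H) ({a} : Set H) ⊆ A :=
      (hmul_mono' (subset_refl _) (singleton_subset_iff.2 ha)).trans (hsubA x)
    have h2 : hmul op ({y} : Set H) (hmul op {x} ({a} : Set H)) ⊆ A :=
      (hmul_mono' (subset_refl _) h1).trans (hsubA y)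
    have h3 : hmul op ({e} : Set H) ({a} : Set H) ⊆ A :=
      (hmul_mono' (subset_refl _) (singleton_subset_iff.2 ha)).trans (hsubA e)
    have : a ∈ hmul op (hmul op {y} (hmul op {x} ({a} : Set H))) (hmul op {e} ({a} : Set H)) := by
      rw [← step2]; exact step1 hxy
    exact hmul_mono' h2 h3 this
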